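/- Envelope integration: Let D ⊆ ℝ be a nonempty compact set, u_A(y,θ) = (θ+b(θ))y + a(y) with b continuously differentiable, and define v(θ) = max_{y∈D} u_A(y,θ) and y_A(D,θ) any measurable selection of the argmax. Then for all θ ∈ [θ̲,θ̄], v(θ) − v(θ̲) = ∫_{θ̲}^{θ} (1 + b'(ξ))·y_A(D,ξ) dξ. -/

import Mathlib

open Set Filter MeasureTheory intervalIntegral
open scoped Interval

set_option maxHeartbeats 1000000 in
private lemma envelope_core (θl θu : ℝ) (t t' V y : ℝ → ℝ) (M K : ℝ)
    (hM0 : 0 < M) (hK0 : 0 < K)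
    (hyM : ∀ ξ ∈ Icc θl θu, |y ξ| ≤ M)
    (hymeas : Measurable y)
    (ht'K : ∀ ξ ∈ Icc θl θu, |t' ξ| ≤ K)
    (ht : ∀ x ∈ Icc θl θu, HasDerivAt t (t' x) x)
    (ht'cont : ContinuousOn t' (Icc θl θu))
    (hlow : ∀ ξ ∈ Icc θl θu, ∀ η ∈ Icc θl θu, (t η - t ξ) * y ξ ≤ V η - V ξ)
    (θ : ℝ) (hθm : θ ∈ Icc θl θu) :
    V θ - V θl = ∫ ξ in θl..θ, t' ξ * y ξ := by
  obtain ⟨hθ1, hθ2⟩ := hθm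
  have hlu : θl ≤ θu := le_trans hθ1 hθ2
  have hlmem : θl ∈ Icc θl θu := ⟨le_refl _, hlu⟩
  have hθmem : θ ∈ Icc θl θu := ⟨hθ1, hθ2⟩
  -- |V η - V ξ| ≤ |t η - t ξ| * M
  have habs : ∀ ξ ∈ Icc θl θu, ∀ η ∈ Icc θl θu, |V η - V ξ| ≤ |t η - t ξ| * M := by
    intro ξ hξ η hη
    have h1 := hlow ξ hξ η hη
    have h2 := hlow η hη ξ hξ
    have e1 : (t η - t ξ) * y ξ ≥ -(|t η - t ξ| * M) := by
      have : |(t η - t ξ) * y ξ| ≤ |t η - t ξ| * M := by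
        rw [abs_mul]
        exact mul_le_mul_of_nonneg_left (hyM ξ hξ) (abs_nonneg _)
      linarith [neg_abs_le ((t η - t ξ) * y ξ)]
    have e2 : (t ξ - t η) * y η ≥ -(|t η - t ξ| * M) := by
      have : |(t ξ - t η) * y η| ≤ |t η - t ξ| * M := by
        rw [abs_mul, abs_sub_comm]
        exact mul_le_mul_of_nonneg_left (hyM η hη) (abs_nonneg _)
      linarith [neg_abs_le ((t ξ - t η) * y η)]
    rw [abs_le]
    constructor <;> linarith
  -- continuity of V on Icc
  have hVcont : ContinuousOn V (Icc θl θu) := by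
    intro x hx
    rw [Metric.continuousWithinAt_iff]
    intro ε hε
    have htc : ContinuousWithinAt t (Icc θl θu) x := ((ht x hx).continuousAt).continuousWithinAt
    rw [Metric.continuousWithinAt_iff] at htc
    obtain ⟨δ, hδ0, hδ⟩ := htc (ε / (M + 1)) (by positivity)
    refine ⟨δ, hδ0, fun z hz hdz => ?_⟩
    have h1 : |V z - V x| ≤ |t z - t x| * M := habs x hx z hz
    have h2 : |t z - t x| < ε / (M + 1) := by
      have := hδ hz hdz; rwa [Real.dist_eq] at this
    rw [Real.dist_eq]
    calc |V z - V x| ≤ |t z - t x| * M := h1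
      _ ≤ |t z - t x| * (M + 1) := mul_le_mul_of_nonneg_left (by linarith) (abs_nonneg _)
      _ < (ε / (M + 1)) * (M + 1) := mul_lt_mul_of_pos_right h2 (by linarith)
      _ = ε := div_mul_cancel₀ _ (by positivity)
  -- interval integrability of φ := t' * y
  set φ : ℝ → ℝ := fun ξ => t' ξ * y ξ with hφ
  have hφint : ∀ c d, θl ≤ c → c ≤ d → d ≤ θu → IntervalIntegrable φ volume c d := by
    intro c d hc hcd hd
    rw [intervalIntegrable_iff, uIoc_of_le hcd]
    have hsub : Ioc c d ⊆ Icc θl θu := fun x hx => ⟨le_trans hc (le_of_lt hx.1), le_trans hx.2 hd⟩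
    have hmeasφ : AEStronglyMeasurable φ (volume.restrict (Ioc c d)) :=
      ((ht'cont.mono hsub).aestronglyMeasurable measurableSet_Ioc).mul
        (hymeas.aestronglyMeasurable.restrict)
    refine Integrable.mono' (g := fun _ => K * M)
      (integrableOn_const measure_Ioc_lt_top.ne) hmeasφ ?_
    rw [ae_restrict_iff' measurableSet_Ioc]
    refine ae_of_all _ fun x hx => ?_
    have hxm := hsub hx
    rw [Real.norm_eq_abs, hφ]
    simp only
    rw [abs_mul]
    exact mul_le_mul (ht'K x hxm) (hyM x hxm) (abs_nonneg _) (le_of_lt hK0)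
  have hVint : ∀ c d, c ∈ Icc θl θu → d ∈ Icc θl θu → IntervalIntegrable V volume c d :=
    fun c d hc hd => (hVcont.mono (uIcc_subset_Icc hc hd)).intervalIntegrable
  -- trivial case
  rcases eq_or_lt_of_le hθ1 with rfl | hlt
  · simp
  -- uniform continuity
  have hVuc := (isCompact_Icc.uniformContinuousOn_of_continuous hVcont)
  have ht'uc := (isCompact_Icc.uniformContinuousOn_of_continuous ht'cont)
  rw [Metric.uniformContinuousOn_iff_le] at hVuc ht'uc
  have hΔ0 : (0:ℝ) < θ - θl := by linarith
  set I : ℝ := ∫ ξ in θl..θ, φ ξ with hI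
  have hC0 : (0:ℝ) < K * M + M * (θ - θl) + 2 := by nlinarith
  -- key estimate
  have key : ∀ ε : ℝ, 0 < ε → |V θ - V θl - I| ≤ ε * (K * M + M * (θ - θl) + 2) := by
    intro ε hε
    obtain ⟨δ1, hδ10, hδ1⟩ := hVuc ε hε
    obtain ⟨δ2, hδ20, hδ2⟩ := ht'uc ε hε
    set h : ℝ := min (min δ1 δ2) (min (θ - θl) ε) with hh
    have hh0 : 0 < h := lt_min (lt_min hδ10 hδ20) (lt_min hΔ0 hε)
    have hhδ1 : h ≤ δ1 := le_trans (min_le_left _ _) (min_le_left _ _)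
    have hhδ2 : h ≤ δ2 := le_trans (min_le_left _ _) (min_le_right _ _)
    have hhΔ : h ≤ θ - θl := le_trans (min_le_right _ _) (min_le_left _ _)
    have hhε : h ≤ ε := le_trans (min_le_right _ _) (min_le_right _ _)
    have hm1 : θl + h ≤ θ := by linarith
    have hm2 : θl ≤ θ - h := by linarith
    have hmem1 : θ - h ∈ Icc θl θu := ⟨hm2, by linarith⟩
    have hmem2 : θl + h ∈ Icc θl θu := ⟨by linarith, by linarith⟩
    -- S1 : translation identity
    have hVshift : IntervalIntegrable (fun ξ => V (ξ + h)) volume θl (θ - h) := by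
      apply ContinuousOn.intervalIntegrable
      apply hVcont.comp (continuous_id.add continuous_const).continuousOn
      intro x hx
      rw [uIcc_of_le hm2] at hx
      show x + h ∈ Icc θl θu
      exact ⟨by linarith [hx.1], by linarith [hx.2]⟩
    have hJdef : (∫ ξ in θl..θ - h, (V (ξ + h) - V ξ))
        = (∫ ξ in θ - h..θ, V ξ) - ∫ ξ in θl..θl + h, V ξ := by
      have e0 : (∫ ξ in θl..θ - h, (V (ξ + h) - V ξ))
          = (∫ ξ in θl..θ - h, V (ξ + h)) - ∫ ξ in θl..θ - h, V ξ :=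
        integral_sub hVshift (hVint θl (θ - h) hlmem hmem1)
      have e1 : (∫ ξ in θl..θ - h, V (ξ + h)) = ∫ ξ in θl + h..θ, V ξ := by
        have := integral_comp_add_right (a := θl) (b := θ - h) (f := V) h
        simpa using this
      have e2 : (∫ ξ in θl..θl + h, V ξ) + (∫ ξ in θl + h..θ, V ξ) = ∫ ξ in θl..θ, V ξ :=
        integral_add_adjacent_intervals (hVint _ _ hlmem hmem2) (hVint _ _ hmem2 hθmem)
      have e3 : (∫ ξ in θl..θ - h, V ξ) + (∫ ξ in θ - h..θ, V ξ) = ∫ ξ in θl..θ, V ξ :=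
        integral_add_adjacent_intervals (hVint _ _ hlmem hmem1) (hVint _ _ hmem1 hθmem)
      rw [e0, e1]
      linarith
    -- nearness bound for V
    have hVnear : ∀ c, c ∈ Icc θl θu → ∀ ξ ∈ Icc θl θu, |ξ - c| ≤ h → |V ξ - V c| ≤ ε := by
      intro c hc ξ hξ hd
      have := hδ1 ξ hξ c hc (by rw [Real.dist_eq]; exact le_trans hd hhδ1)
      rwa [Real.dist_eq] at this
    -- end integral bounds for V
    have hend : ∀ c d p : ℝ, c ∈ Icc θl θu → d ∈ Icc θl θu → p ∈ Icc θl θu → c ≤ d →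
        d - c = h → (∀ ξ ∈ Icc c d, |ξ - p| ≤ h) →
        h * V p - h * ε ≤ (∫ ξ in c..d, V ξ) ∧ (∫ ξ in c..d, V ξ) ≤ h * V p + h * ε := by
      intro c d p hc hd hp hcd hdc hnear
      have hsub : Icc c d ⊆ Icc θl θu := Icc_subset_Icc hc.1 hd.2
      have hb : ∀ ξ ∈ Icc c d, V p - ε ≤ V ξ ∧ V ξ ≤ V p + ε := by
        intro ξ hξ
        have h2 := hVnear p hp ξ (hsub hξ) (hnear ξ hξ)
        rw [abs_le] at h2
        exact ⟨by linarith [h2.1], by linarith [h2.2]⟩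
      constructor
      · have := integral_mono_on hcd (_root_.intervalIntegrable_const) (hVint c d hc hd)
          (fun ξ hξ => (hb ξ hξ).1)
        rw [intervalIntegral.integral_const, smul_eq_mul, hdc] at this
        linarith
      · have := integral_mono_on hcd (hVint c d hc hd) (_root_.intervalIntegrable_const)
          (fun ξ hξ => (hb ξ hξ).2)
        rw [intervalIntegral.integral_const, smul_eq_mul, hdc] at this
        linarith
    have hend1 := hend (θ - h) θ θ hmem1 hθmem hθmem (by linarith) (by ring)
      (fun ξ hξ => by rw [abs_le]; exact ⟨by linarith [hξ.1], by linarith [hξ.2, hh0]⟩)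
    have hend2 := hend θl (θl + h) θl hlmem hmem2 hlmem (by linarith) (by ring)
      (fun ξ hξ => by rw [abs_le]; exact ⟨by linarith [hξ.1, hh0], by linarith [hξ.2]⟩)
    -- pointwise sandwich
    have hpt : ∀ ξ ∈ Icc θl (θ - h),
        (h * φ ξ - ε * h * M ≤ V (ξ + h) - V ξ) ∧
        (V (ξ + h) - V ξ ≤ h * φ (ξ + h) + ε * h * M) := by
      intro ξ hξ
      have hξm : ξ ∈ Icc θl θu := ⟨hξ.1, by linarith [hξ.2]⟩
      have hξhm : ξ + h ∈ Icc θl θu := ⟨by linarith [hξ.1], by linarith [hξ.2]⟩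
      have hle : ξ ≤ ξ + h := by linarith
      have hsub2 : uIcc ξ (ξ + h) ⊆ Icc θl θu := by
        rw [uIcc_of_le hle]
        exact Icc_subset_Icc hξm.1 hξhm.2
      have ht'int : IntervalIntegrable t' volume ξ (ξ + h) :=
        (ht'cont.mono hsub2).intervalIntegrable
      have eFTC : (∫ s in ξ..ξ + h, t' s) = t (ξ + h) - t ξ :=
        integral_eq_sub_of_hasDerivAt (fun x hx => ht x (hsub2 hx)) ht'int
      have hIoc : Ι ξ (ξ + h) ⊆ Icc θl θu := by
        rw [uIoc_of_le hle]
        exact fun s hs => ⟨by linarith [hξm.1, hs.1.le], by linarith [hs.2, hξhm.2]⟩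
      have hdev : ∀ p ∈ Icc θl θu, (∀ s ∈ Ι ξ (ξ + h), |s - p| ≤ h) →
          |(∫ s in ξ..ξ + h, t' s) - h * t' p| ≤ ε * h := by
        intro p hp hnear
        have e1 : (∫ s in ξ..ξ + h, t' s) - h * t' p = ∫ s in ξ..ξ + h, (t' s - t' p) := by
          rw [integral_sub ht'int (_root_.intervalIntegrable_const)]
          rw [intervalIntegral.integral_const, smul_eq_mul]
          ring
        rw [e1]
        have hb := intervalIntegral.norm_integral_le_of_norm_le_const (C := ε)
          (f := fun s => t' s - t' p) (a := ξ) (b := ξ + h) (fun s hs => by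
            have hsm := hIoc hs
            have := hδ2 s hsm p hp (by rw [Real.dist_eq]; exact le_trans (hnear s hs) hhδ2)
            rwa [Real.norm_eq_abs, ← Real.dist_eq])
        rw [Real.norm_eq_abs] at hb
        calc |∫ s in ξ..ξ + h, (t' s - t' p)| ≤ ε * |ξ + h - ξ| := hb
          _ = ε * h := by rw [show ξ + h - ξ = h by ring, abs_of_pos hh0]
      have hnearξ : ∀ s ∈ Ι ξ (ξ + h), |s - ξ| ≤ h := by
        intro s hs
        rw [uIoc_of_le hle] at hs
        rw [abs_le]
        exact ⟨by linarith [hs.1.le], by linarith [hs.2]⟩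
      have hnearξh : ∀ s ∈ Ι ξ (ξ + h), |s - (ξ + h)| ≤ h := by
        intro s hs
        rw [uIoc_of_le hle] at hs
        rw [abs_le]
        exact ⟨by linarith [hs.1.le], by linarith [hs.2]⟩
      have d1 := hdev ξ hξm hnearξ
      have d2 := hdev (ξ + h) hξhm hnearξh
      constructor
      · have hl := hlow ξ hξm (ξ + h) hξhm
        have expand : (t (ξ + h) - t ξ) * y ξ
            = h * (t' ξ * y ξ) + ((∫ s in ξ..ξ + h, t' s) - h * t' ξ) * y ξ := by
          rw [← eFTC]; ring
        have hb1 : |((∫ s in ξ..ξ + h, t' s) - h * t' ξ) * y ξ| ≤ ε * h * M := by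
          rw [abs_mul]
          exact mul_le_mul d1 (hyM ξ hξm) (abs_nonneg _) (by positivity)
        have hb2 := neg_abs_le (((∫ s in ξ..ξ + h, t' s) - h * t' ξ) * y ξ)
        simp only [hφ]
        linarith
      · have hu := hlow (ξ + h) hξhm ξ hξm
        have flip : (t ξ - t (ξ + h)) * y (ξ + h) = -((t (ξ + h) - t ξ) * y (ξ + h)) := by ring
        have expand : (t (ξ + h) - t ξ) * y (ξ + h)
            = h * (t' (ξ + h) * y (ξ + h))
              + ((∫ s in ξ..ξ + h, t' s) - h * t' (ξ + h)) * y (ξ + h) := by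
          rw [← eFTC]; ring
        have hb1 : |((∫ s in ξ..ξ + h, t' s) - h * t' (ξ + h)) * y (ξ + h)| ≤ ε * h * M := by
          rw [abs_mul]
          exact mul_le_mul d2 (hyM (ξ + h) hξhm) (abs_nonneg _) (by positivity)
        have hb2 := le_abs_self (((∫ s in ξ..ξ + h, t' s) - h * t' (ξ + h)) * y (ξ + h))
        simp only [hφ]
        linarith
    -- integrated sandwich
    have hφint1 : IntervalIntegrable φ volume θl (θ - h) := hφint _ _ le_rfl hm2 (by linarith)
    have hφshift : IntervalIntegrable (fun ξ => φ (ξ + h)) volume θl (θ - h) := by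
      have := (hφint (θl + h) θ (by linarith) hm1 hθ2).comp_add_right h
      simpa using this
    have hVdiffint : IntervalIntegrable (fun ξ => V (ξ + h) - V ξ) volume θl (θ - h) :=
      hVshift.sub (hVint _ _ hlmem hmem1)
    have hSl : h * (∫ ξ in θl..θ - h, φ ξ) - ε * h * M * (θ - h - θl)
        ≤ ∫ ξ in θl..θ - h, (V (ξ + h) - V ξ) := by
      have hmono := integral_mono_on hm2
        ((hφint1.const_mul h).sub (_root_.intervalIntegrable_const)) hVdiffint
        (fun ξ hξ => (hpt ξ hξ).1)
      calc h * (∫ ξ in θl..θ - h, φ ξ) - ε * h * M * (θ - h - θl)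
          = ∫ ξ in θl..θ - h, (h * φ ξ - ε * h * M) := by
            rw [integral_sub (hφint1.const_mul h) (_root_.intervalIntegrable_const),
              intervalIntegral.integral_const_mul, intervalIntegral.integral_const, smul_eq_mul]
            ring
        _ ≤ _ := hmono
    have ecomp : (∫ ξ in θl..θ - h, φ (ξ + h)) = ∫ ξ in θl + h..θ, φ ξ := by
      have := integral_comp_add_right (a := θl) (b := θ - h) (f := φ) h
      simpa using this
    have hSu : (∫ ξ in θl..θ - h, (V (ξ + h) - V ξ))
        ≤ h * (∫ ξ in θl + h..θ, φ ξ) + ε * h * M * (θ - h - θl) := by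
      have hmono := integral_mono_on hm2 hVdiffint
        ((hφshift.const_mul h).add (_root_.intervalIntegrable_const))
        (fun ξ hξ => (hpt ξ hξ).2)
      calc (∫ ξ in θl..θ - h, (V (ξ + h) - V ξ))
          ≤ ∫ ξ in θl..θ - h, (h * φ (ξ + h) + ε * h * M) := hmono
        _ = h * (∫ ξ in θl + h..θ, φ ξ) + ε * h * M * (θ - h - θl) := by
            rw [integral_add (hφshift.const_mul h) (_root_.intervalIntegrable_const),
              intervalIntegral.integral_const_mul, ecomp, intervalIntegral.integral_const,
              smul_eq_mul]
            ring
    -- end bounds for φ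
    have hφnorm : ∀ c d, θl ≤ c → c ≤ d → d ≤ θu → |∫ ξ in c..d, φ ξ| ≤ K * M * (d - c) := by
      intro c d h1 h2 h3
      have hsub : Ι c d ⊆ Icc θl θu := by
        rw [uIoc_of_le h2]
        exact fun s hs => ⟨by linarith [hs.1.le], by linarith [hs.2]⟩
      have hb := intervalIntegral.norm_integral_le_of_norm_le_const (C := K * M) (f := φ)
        (a := c) (b := d) (fun s hs => by
          have hsm := hsub hs
          rw [Real.norm_eq_abs, hφ]
          simp only
          rw [abs_mul]
          exact mul_le_mul (ht'K s hsm) (hyM s hsm) (abs_nonneg _) hK0.le)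
      rw [Real.norm_eq_abs] at hb
      calc |∫ ξ in c..d, φ ξ| ≤ K * M * |d - c| := hb
        _ = K * M * (d - c) := by rw [abs_of_nonneg (by linarith)]
    have hB : |∫ ξ in θ - h..θ, φ ξ| ≤ K * M * h := by
      have := hφnorm (θ - h) θ hm2 (by linarith) hθ2
      simpa [show θ - (θ - h) = h by ring] using this
    have hB' : |∫ ξ in θl..θl + h, φ ξ| ≤ K * M * h := by
      have := hφnorm θl (θl + h) le_rfl (by linarith) (by linarith)
      simpa [show θl + h - θl = h by ring] using this
    have hsplit1 : (∫ ξ in θl..θ - h, φ ξ) + (∫ ξ in θ - h..θ, φ ξ) = I :=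
      integral_add_adjacent_intervals hφint1 (hφint _ _ hm2 (by linarith) hθ2)
    have hsplit2 : (∫ ξ in θl..θl + h, φ ξ) + (∫ ξ in θl + h..θ, φ ξ) = I :=
      integral_add_adjacent_intervals (hφint _ _ le_rfl (by linarith) (by linarith))
        (hφint _ _ (by linarith) hm1 hθ2)
    -- assemble
    have hBmul : h * |∫ ξ in θ - h..θ, φ ξ| ≤ h * (K * M * ε) := by
      apply mul_le_mul_of_nonneg_left _ hh0.le
      calc |∫ ξ in θ - h..θ, φ ξ| ≤ K * M * h := hB
        _ ≤ K * M * ε := mul_le_mul_of_nonneg_left hhε (by positivity)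
    have hBmul' : h * |∫ ξ in θl..θl + h, φ ξ| ≤ h * (K * M * ε) := by
      apply mul_le_mul_of_nonneg_left _ hh0.le
      calc |∫ ξ in θl..θl + h, φ ξ| ≤ K * M * h := hB'
        _ ≤ K * M * ε := mul_le_mul_of_nonneg_left hhε (by positivity)
    have hm1' : h * (∫ ξ in θl..θ - h, φ ξ) = h * I - h * (∫ ξ in θ - h..θ, φ ξ) := by
      rw [← hsplit1]; ring
    have hm2' : h * (∫ ξ in θl + h..θ, φ ξ) = h * I - h * (∫ ξ in θl..θl + h, φ ξ) := by
      rw [← hsplit2]; ring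
    have hΔbound : ε * h * M * (θ - h - θl) ≤ h * (ε * M * (θ - θl)) := by
      have h1 : ε * h * M * (θ - h - θl) ≤ ε * h * M * (θ - θl) :=
        mul_le_mul_of_nonneg_left (by linarith) (by positivity)
      calc ε * h * M * (θ - h - θl) ≤ ε * h * M * (θ - θl) := h1
        _ = h * (ε * M * (θ - θl)) := by ring
    have hB1 := le_abs_self (∫ ξ in θ - h..θ, φ ξ)
    have hB2 := neg_abs_le (∫ ξ in θ - h..θ, φ ξ)
    have hB1' := le_abs_self (∫ ξ in θl..θl + h, φ ξ)
    have hB2' := neg_abs_le (∫ ξ in θl..θl + h, φ ξ)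
    -- lower bound : h * (I - ε * C) ≤ h * (V θ - V θl)
    have hlow' : h * (I - ε * (K * M + M * (θ - θl) + 2)) ≤ h * (V θ - V θl) := by
      have hmulB : h * (∫ ξ in θ - h..θ, φ ξ) ≤ h * (K * M * ε) := by
        calc h * (∫ ξ in θ - h..θ, φ ξ) ≤ h * |∫ ξ in θ - h..θ, φ ξ| :=
              mul_le_mul_of_nonneg_left hB1 hh0.le
          _ ≤ h * (K * M * ε) := hBmul
      linarith [hSl, hJdef, hend1.2, hend2.1, hm1', hΔbound, hmulB]
    have hup' : h * (V θ - V θl) ≤ h * (I + ε * (K * M + M * (θ - θl) + 2)) := by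
      have hmulB' : -(h * (K * M * ε)) ≤ h * (∫ ξ in θl..θl + h, φ ξ) := by
        have : h * (-|∫ ξ in θl..θl + h, φ ξ|) ≤ h * (∫ ξ in θl..θl + h, φ ξ) :=
          mul_le_mul_of_nonneg_left hB2' hh0.le
        nlinarith [hBmul']
      linarith [hSu, hJdef, hend1.1, hend2.2, hm2', hΔbound, hmulB']
    have hlowf : I - ε * (K * M + M * (θ - θl) + 2) ≤ V θ - V θl :=
      le_of_mul_le_mul_left (by linarith [hlow']) hh0
    have hupf : V θ - V θl ≤ I + ε * (K * M + M * (θ - θl) + 2) :=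
      le_of_mul_le_mul_left (by linarith [hup']) hh0
    rw [abs_le]
    constructor <;> linarith
  -- conclude
  have hfin : ∀ ε' : ℝ, 0 < ε' → |V θ - V θl - I| ≤ ε' := by
    intro ε' hε'
    have hc := key (ε' / (K * M + M * (θ - θl) + 2)) (by positivity)
    calc |V θ - V θl - I| ≤ (ε' / (K * M + M * (θ - θl) + 2)) * (K * M + M * (θ - θl) + 2) := hc
      _ = ε' := div_mul_cancel₀ _ (ne_of_gt hC0)
  have : |V θ - V θl - I| ≤ 0 := by
    refine le_of_forall_pos_le_add fun ε' hε' => ?_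
    simpa using hfin ε' hε'
  have := abs_nonpos_iff.mp this
  linarith [sub_eq_zero.mp this]

/-- Envelope integration: the agent's value function from a compact delegation set satisfies
`v(θ) − v(θ̲) = ∫_{θ̲}^{θ} (1 + b'(ξ))·y_A(D,ξ) dξ`. -/
theorem stmt_11 (θl θu : ℝ) (hθ : θl ≤ θu) (a b b' : ℝ → ℝ)
    (ha : Continuous a)
    (hb : ∀ θ ∈ Icc θl θu, HasDerivAt b (b' θ) θ)
    (hb'cont : ContinuousOn b' (Icc θl θu))
    (D : Set ℝ) (hD : D.Nonempty) (hDc : IsCompact D)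
    (yAD : ℝ → ℝ) (hmeas : Measurable yAD)
    (hsel : ∀ θ ∈ Icc θl θu, yAD θ ∈ D ∧
      ∀ y ∈ D, (θ + b θ) * y + a y ≤ (θ + b θ) * yAD θ + a (yAD θ)) :
    ∀ θ ∈ Icc θl θu,
      sSup ((fun y => (θ + b θ) * y + a y) '' D)
        - sSup ((fun y => (θl + b θl) * y + a y) '' D)
        = ∫ ξ in θl..θ, (1 + b' ξ) * yAD ξ := by
  intro θ hθm
  obtain ⟨M0, hM0b⟩ := hDc.isBounded.exists_norm_le
  have hM0 : (0:ℝ) < |M0| + 1 := by positivity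
  have hyM : ∀ ξ ∈ Icc θl θu, |yAD ξ| ≤ |M0| + 1 := by
    intro ξ hξ
    have := hM0b _ (hsel ξ hξ).1
    rw [Real.norm_eq_abs] at this
    linarith [le_abs_self M0]
  have ht'cont : ContinuousOn (fun ξ => 1 + b' ξ) (Icc θl θu) := continuousOn_const.add hb'cont
  obtain ⟨K0, hK0b⟩ := isCompact_Icc.exists_bound_of_continuousOn ht'cont
  have hK0 : (0:ℝ) < |K0| + 1 := by positivity
  have ht'K : ∀ ξ ∈ Icc θl θu, |(fun ζ => 1 + b' ζ) ξ| ≤ |K0| + 1 := by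
    intro ξ hξ
    have := hK0b ξ hξ
    rw [Real.norm_eq_abs] at this
    simp only at this ⊢
    linarith [le_abs_self K0]
  have ht : ∀ x ∈ Icc θl θu, HasDerivAt (fun ζ => ζ + b ζ) ((fun ζ => 1 + b' ζ) x) x :=
    fun x hx => (hasDerivAt_id x).add (hb x hx)
  set V : ℝ → ℝ := fun ξ => sSup ((fun y => (ξ + b ξ) * y + a y) '' D) with hV
  have hbdd : ∀ ξ : ℝ, BddAbove ((fun y => (ξ + b ξ) * y + a y) '' D) := fun ξ =>
    (hDc.image_of_continuousOn ((continuous_const.mul continuous_id).add ha).continuousOn).bddAbove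
  have hVval : ∀ ξ ∈ Icc θl θu, V ξ = (ξ + b ξ) * yAD ξ + a (yAD ξ) := by
    intro ξ hξ
    apply le_antisymm
    · apply csSup_le (hD.image _)
      rintro z ⟨w, hw, rfl⟩
      exact (hsel ξ hξ).2 w hw
    · exact le_csSup (hbdd ξ) (mem_image_of_mem _ (hsel ξ hξ).1)
  have hlow : ∀ ξ ∈ Icc θl θu, ∀ η ∈ Icc θl θu,
      ((fun ζ => ζ + b ζ) η - (fun ζ => ζ + b ζ) ξ) * yAD ξ ≤ V η - V ξ := by
    intro ξ hξ η hη
    have h1 : (η + b η) * yAD ξ + a (yAD ξ) ≤ V η :=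
      le_csSup (hbdd η) (mem_image_of_mem _ (hsel ξ hξ).1)
    have h2 := hVval ξ hξ
    simp only
    have e : (η + b η - (ξ + b ξ)) * yAD ξ
        = (η + b η) * yAD ξ - (ξ + b ξ) * yAD ξ := by ring
    rw [e]
    linarith
  have hcore := envelope_core θl θu (fun ζ => ζ + b ζ) (fun ζ => 1 + b' ζ) V yAD
    (|M0| + 1) (|K0| + 1) hM0 hK0 hyM hmeas ht'K ht ht'cont hlow θ hθm
  exact hcore
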